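/- Let (X, d) be a finite metric space with point sets A (agents) and B (items), |A| = |B| = n, and suppose M is a perfect matching (bijection A → B) such that for every subset S ⊆ A ∪ B, |{(a, M a) : a ∈ S, M a ∉ S or a ∉ S, M a ∈ S}| ≤ β · Σ_{(u,v) crossing S} p(u,v), where p is a fractional matching. Suppose further the metric d satisfies Σ_S γ_S·d_S(u,v) ≤ d(u,v) ≤ L·Σ_S γ_S·d_S(u,v) for all u, v, where γ_S ≥ 0 and d_S(u,v) = 1 if exactly one of u, v is in S and 0 otherwise. Then Σ_{a ∈ A} d(a, M a) ≤ L·β·Σ_{(u,v) ∈ A×B} p(u,v)·d(u,v). -/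
import Mathlib


/-- Thinness of a matching with respect to cuts, plus an `L`-distortion embedding of the
metric into a conic combination of cut metrics, implies `cost(M) ≤ L·β·cost(p)`. -/
theorem stmt13 {X : Type*} [MetricSpace X] [DecidableEq X] (n : ℕ)
    (A B : Finset X) (hA : A.card = n) (hB : B.card = n)
    (M : X → X) (hM : Set.BijOn M ↑A ↑B)
    (p : X → X → ℝ) (hp : ∀ u v, 0 ≤ p u v)
    (β L : ℝ) (hβ : 0 ≤ β) (hL : 0 ≤ L)
    (dS : Finset X → X → X → ℝ)
    (hdS : ∀ S u v, dS S u v = if (u ∈ S) ↔ (v ∈ S) then 0 else 1)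
    (γ : Finset X → ℝ) (hγ : ∀ S, 0 ≤ γ S)
    (hthin : ∀ S ∈ (A ∪ B).powerset,
      (∑ a ∈ A, dS S a (M a)) ≤ β * ∑ u ∈ A, ∑ v ∈ B, p u v * dS S u v)
    (hembed : ∀ u v, (∑ S ∈ (A ∪ B).powerset, γ S * dS S u v) ≤ dist u v ∧
      dist u v ≤ L * ∑ S ∈ (A ∪ B).powerset, γ S * dS S u v) :
    ∑ a ∈ A, dist a (M a) ≤ L * β * ∑ u ∈ A, ∑ v ∈ B, p u v * dist u v := by
  set P := (A ∪ B).powerset with hP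
  have hdS0 : ∀ S u v, 0 ≤ dS S u v := by
    intro S u v; rw [hdS]; split <;> norm_num
  calc ∑ a ∈ A, dist a (M a)
      ≤ ∑ a ∈ A, L * ∑ S ∈ P, γ S * dS S a (M a) := by
        exact Finset.sum_le_sum fun a _ => (hembed a (M a)).2
    _ = L * ∑ S ∈ P, γ S * ∑ a ∈ A, dS S a (M a) := by
        rw [← Finset.mul_sum, Finset.sum_comm]
        congr 1
        exact Finset.sum_congr rfl fun S _ => (Finset.mul_sum _ _ _).symm
    _ ≤ L * ∑ S ∈ P, γ S * (β * ∑ u ∈ A, ∑ v ∈ B, p u v * dS S u v) := by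
        apply mul_le_mul_of_nonneg_left _ hL
        exact Finset.sum_le_sum fun S hS =>
          mul_le_mul_of_nonneg_left (hthin S hS) (hγ S)
    _ = L * β * ∑ u ∈ A, ∑ v ∈ B, p u v * ∑ S ∈ P, γ S * dS S u v := by
        simp only [Finset.mul_sum]
        rw [Finset.sum_comm]
        refine Finset.sum_congr rfl fun u _ => ?_
        rw [Finset.sum_comm]
        refine Finset.sum_congr rfl fun v _ => ?_
        refine Finset.sum_congr rfl fun S _ => ?_
        ring
    _ ≤ L * β * ∑ u ∈ A, ∑ v ∈ B, p u v * dist u v := by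
        apply mul_le_mul_of_nonneg_left _ (mul_nonneg hL hβ)
        refine Finset.sum_le_sum fun u _ => Finset.sum_le_sum fun v _ => ?_
        exact mul_le_mul_of_nonneg_left (hembed u v).1 (hp u v)
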